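/- arXiv:1503.00203 — 2 statements merged into one kernel-verified Lean document; each statement's English description precedes it below -/
import Mathlib

section
/- Let (X, m) be a measure space with 0 < m(X) < ∞, let ν ∈ [1, ∞), and let E ⊆ X be a measurable set with m(E) > 0. Let f ∈ L^ν(X, m) be a real-valued function with f = 0 m-almost everywhere on E, and let f̄ := (1/m(X)) ∫_X f dm denote its mean. Then ‖f‖_{L^ν(X,m)} ≤ (1 + (m(X)/m(E))^{1/ν}) · ‖f − f̄‖_{L^ν(X,m)}. -/
open MeasureTheory

/-- If `f ∈ L^ν(X,m)` vanishes a.e. on a set `E` of positive measure in a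
finite measure space, then the `L^ν` norm of `f` is controlled by the `L^ν` norm of `f`
minus its mean, with constant `1 + (m(X)/m(E))^{1/ν}`. -/
theorem stmt0 {X : Type*} [MeasurableSpace X] (m : Measure X) (ν : ℝ) (hν : 1 ≤ ν)
    (hX0 : 0 < m Set.univ) (hXfin : m Set.univ < ⊤)
    (E : Set X) (hE : MeasurableSet E) (hE0 : 0 < m E)
    (f : X → ℝ) (hf : MemLp f (ENNReal.ofReal ν) m)
    (hfE : ∀ᵐ x ∂(m.restrict E), f x = 0) :
    (∫ x, |f x| ^ ν ∂m) ^ (1 / ν) ≤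
      (1 + ((m Set.univ).toReal / (m E).toReal) ^ (1 / ν)) *
        (∫ x, |f x - ((m Set.univ).toReal)⁻¹ * ∫ y, f y ∂m| ^ ν ∂m) ^ (1 / ν) := by
  have hν0 : (0:ℝ) < ν := lt_of_lt_of_le one_pos hν
  have : IsFiniteMeasure m := ⟨hXfin⟩
  set p : ENNReal := ENNReal.ofReal ν with hp
  have hp0 : p ≠ 0 := by simp [hp, ENNReal.ofReal_eq_zero, not_le, hν0]
  have hptop : p ≠ ⊤ := ENNReal.ofReal_ne_top
  have hpt : p.toReal = ν := ENNReal.toReal_ofReal hν0.le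
  set M : ℝ := (m Set.univ).toReal with hM
  set e : ℝ := (m E).toReal with he
  have hMpos : 0 < M := ENNReal.toReal_pos hX0.ne' hXfin.ne
  have hepos : 0 < e := ENNReal.toReal_pos hE0.ne' (lt_of_le_of_lt (m.mono (Set.subset_univ E)) hXfin).ne
  set c : ℝ := M⁻¹ * ∫ y, f y ∂m with hc
  set g : X → ℝ := fun x => f x - c with hg
  have hgmem : MemLp g p m := hf.sub (memLp_const c)
  have hcmem : MemLp (fun _ : X => c) p m := memLp_const c
  -- abbreviations
  set A : ℝ := (∫ x, |f x| ^ ν ∂m) ^ (1 / ν) with hA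
  set B : ℝ := (∫ x, |g x| ^ ν ∂m) ^ (1 / ν) with hB
  have hAnn : 0 ≤ A := Real.rpow_nonneg (integral_nonneg fun x => Real.rpow_nonneg (abs_nonneg _) _) _
  have hBnn : 0 ≤ B := Real.rpow_nonneg (integral_nonneg fun x => Real.rpow_nonneg (abs_nonneg _) _) _
  -- eLpNorm descriptions
  have hfe : eLpNorm f p m = ENNReal.ofReal A := by
    rw [hf.eLpNorm_eq_integral_rpow_norm hp0 hptop]
    simp [hpt, Real.norm_eq_abs, hA, one_div]
  have hge : eLpNorm g p m = ENNReal.ofReal B := by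
    rw [hgmem.eLpNorm_eq_integral_rpow_norm hp0 hptop]
    simp [hpt, Real.norm_eq_abs, hB, one_div]
  have hce : eLpNorm (fun _ : X => c) p m = ENNReal.ofReal (|c| * M ^ (1 / ν)) := by
    rw [hcmem.eLpNorm_eq_integral_rpow_norm hp0 hptop]
    congr 1
    rw [hpt]
    rw [integral_const]
    simp only [smul_eq_mul, Real.norm_eq_abs]
    rw [measureReal_def, Real.mul_rpow (ENNReal.toReal_nonneg) (Real.rpow_nonneg (abs_nonneg _) _), ← hM,
      ← Real.rpow_mul (abs_nonneg c), mul_inv_cancel₀ hν0.ne', Real.rpow_one, one_div, mul_comm]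
  -- triangle inequality
  have hadd : f = fun x => g x + c := by funext x; simp [hg]
  have htri : A ≤ B + |c| * M ^ (1 / ν) := by
    have h := eLpNorm_add_le hgmem.aestronglyMeasurable hcmem.aestronglyMeasurable
      (ENNReal.one_le_ofReal.mpr hν)
    rw [show (g + fun _ : X => c) = f from by funext x; simp [hg]] at h
    rw [hfe, hge, hce, ← ENNReal.ofReal_add hBnn
      (mul_nonneg (abs_nonneg _) (Real.rpow_nonneg hMpos.le _))] at h
    exact (ENNReal.ofReal_le_ofReal_iff
      (add_nonneg hBnn (mul_nonneg (abs_nonneg _) (Real.rpow_nonneg hMpos.le _)))).mp h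
  -- bound |c| by B
  have hgi : Integrable (fun x => |g x| ^ ν) m := by
    have := hgmem.integrable_norm_rpow hp0 hptop
    simpa [hpt, Real.norm_eq_abs] using this
  have hEbound : |c| ^ ν * e ≤ ∫ x, |g x| ^ ν ∂m := by
    have h1 : ∫ x in E, |g x| ^ ν ∂m = |c| ^ ν * e := by
      have : ∀ᵐ x ∂(m.restrict E), |g x| ^ ν = |c| ^ ν := by
        filter_upwards [hfE] with x hx
        simp [hg, hx, abs_neg]
      rw [integral_congr_ae this, setIntegral_const, smul_eq_mul, measureReal_def, ← he, mul_comm]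
    have h2 : ∫ x in E, |g x| ^ ν ∂m ≤ ∫ x, |g x| ^ ν ∂m :=
      setIntegral_le_integral hgi (ae_of_all _ fun x => Real.rpow_nonneg (abs_nonneg _) _)
    linarith [h1 ▸ h2]
  have hcB : |c| * e ^ (1 / ν) ≤ B := by
    have := Real.rpow_le_rpow (by positivity) hEbound (by positivity : (0:ℝ) ≤ 1 / ν)
    calc |c| * e ^ (1 / ν) = (|c| ^ ν * e) ^ (1 / ν) := by
          rw [Real.mul_rpow (Real.rpow_nonneg (abs_nonneg _) _) hepos.le,
            ← Real.rpow_mul (abs_nonneg c), mul_one_div, div_self hν0.ne', Real.rpow_one]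
      _ ≤ B := this
  -- combine
  have hMeB : |c| * M ^ (1 / ν) ≤ (M / e) ^ (1 / ν) * B := by
    have hkey : M ^ (1 / ν) = (M / e) ^ (1 / ν) * e ^ (1 / ν) := by
      rw [← Real.mul_rpow (by positivity) hepos.le, div_mul_cancel₀ _ hepos.ne']
    calc |c| * M ^ (1 / ν) = (M / e) ^ (1 / ν) * (|c| * e ^ (1 / ν)) := by
          rw [hkey]; ring
      _ ≤ (M / e) ^ (1 / ν) * B :=
          mul_le_mul_of_nonneg_left hcB (by positivity)
  calc A ≤ B + |c| * M ^ (1 / ν) := htri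
    _ ≤ B + (M / e) ^ (1 / ν) * B := by linarith
    _ = (1 + (M / e) ^ (1 / ν)) * B := by ring
end

section
/- Let N > 1 be a real number and let d ∈ (0, π]. Suppose λ > 0 and v : ℝ → ℝ is twice continuously differentiable on [−d/2, d/2], is not constant on [−d/2, d/2], satisfies v''(x) − (N−1)·tan(x)·v'(x) = −λ·v(x) for all x ∈ (−d/2, d/2), and satisfies the Neumann boundary conditions v'(−d/2) = v'(d/2) = 0. Then λ ≥ N/(1 − cos^N(d/2)). -/
open Set Real Filter Topology

set_option maxHeartbeats 1600000 in
lemma key (N : ℝ) (hN : 1 < N) (d : ℝ) (hd : 0 < d) (hd' : d ≤ Real.pi)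
    (lam : ℝ) (hlam : 0 < lam) (v : ℝ → ℝ)
    (hv : ContDiffOn ℝ 2 v (Set.Icc (-(d / 2)) (d / 2)))
    (hode : ∀ x ∈ Set.Ioo (-(d / 2)) (d / 2),
      deriv (deriv v) x - (N - 1) * Real.tan x * deriv v x = -lam * v x)
    (hbc₁ : derivWithin v (Set.Icc (-(d / 2)) (d / 2)) (-(d / 2)) = 0)
    (hbc₂ : derivWithin v (Set.Icc (-(d / 2)) (d / 2)) (d / 2) = 0)
    (hlt : lam * (1 - Real.cos (d / 2) ^ N) < N)
    (x₁ : ℝ) (hx₁ : x₁ ∈ Set.Ioo (-(d / 2)) (d / 2))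
    (hgx₁ : 0 < derivWithin v (Set.Icc (-(d / 2)) (d / 2)) x₁) : False := by
  have hr : 0 < d / 2 := by linarith
  have hrπ : d / 2 ≤ π / 2 := by linarith
  set I : Set ℝ := Set.Icc (-(d / 2)) (d / 2) with hIdef
  set g : ℝ → ℝ := derivWithin v I with hgdef
  set c : ℝ := Real.cos (d / 2) ^ N with hcdef
  have hIU : UniqueDiffOn ℝ I := uniqueDiffOn_Icc (by linarith)
  have hvcont : ContinuousOn v I := hv.continuousOn
  have hg1 : ContDiffOn ℝ 1 g I := hv.derivWithin hIU (by norm_num)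
  have hgcont : ContinuousOn g I := hg1.continuousOn
  have hIoosub : Set.Ioo (-(d / 2)) (d / 2) ⊆ I := Set.Ioo_subset_Icc_self
  have hnhds : ∀ x ∈ Set.Ioo (-(d / 2)) (d / 2), I ∈ 𝓝 x := fun x hx =>
    Icc_mem_nhds hx.1 hx.2
  have hcos : ∀ x ∈ Set.Ioo (-(d / 2)) (d / 2), 0 < Real.cos x := by
    intro x hx
    exact Real.cos_pos_of_mem_Ioo ⟨by linarith [hx.1], by linarith [hx.2]⟩
  -- g = deriv v on the interior
  have heq : ∀ x ∈ Set.Ioo (-(d / 2)) (d / 2), g x = deriv v x := fun x hx =>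
    derivWithin_of_mem_nhds (hnhds x hx)
  -- v has derivative g on the interior
  have hgd : ∀ x ∈ Set.Ioo (-(d / 2)) (d / 2), HasDerivAt v (g x) x := by
    intro x hx
    have h1 : DifferentiableWithinAt ℝ v I x :=
      (hv.differentiableOn (by norm_num)) x (hIoosub hx)
    have h2 := h1.differentiableAt (hnhds x hx)
    rw [show g x = deriv v x from heq x hx]
    exact h2.hasDerivAt
  -- g has derivative deriv (deriv v) on the interior
  have hgdiff : ∀ x ∈ Set.Ioo (-(d / 2)) (d / 2), HasDerivAt g (deriv (deriv v) x) x := by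
    intro x hx
    have h1 : DifferentiableWithinAt ℝ g I x := (hg1.differentiableOn (by norm_num)) x (hIoosub hx)
    have h2 : DifferentiableAt ℝ g x := h1.differentiableAt (hnhds x hx)
    have hev : g =ᶠ[𝓝 x] deriv v := by
      filter_upwards [isOpen_Ioo.mem_nhds hx] with y hy
      exact heq y hy
    have h3 : deriv g x = deriv (deriv v) x := hev.deriv_eq
    rw [← h3]
    exact h2.hasDerivAt
  -- the weight p x = cos x ^ (N-1)
  have hp : ∀ x ∈ Set.Ioo (-(d / 2)) (d / 2),
      HasDerivAt (fun y => Real.cos y ^ (N - 1))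
        (-((N - 1) * Real.tan x * Real.cos x ^ (N - 1))) x := by
    intro x hx
    have hcx := hcos x hx
    have h1 : HasDerivAt (fun y => Real.cos y ^ (N - 1))
        ((N - 1) * Real.cos x ^ (N - 1 - 1) * -Real.sin x) x :=
      (Real.hasDerivAt_rpow_const (Or.inl hcx.ne')).comp x (Real.hasDerivAt_cos x)
    convert h1 using 1
    have hkey : Real.cos x ^ (N - 1 - 1) * Real.cos x = Real.cos x ^ (N - 1) := by
      rw [Real.rpow_sub_one hcx.ne']
      exact div_mul_cancel₀ _ hcx.ne'
    have htan : Real.tan x * Real.cos x = Real.sin x := by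
      rw [Real.tan_eq_sin_div_cos]
      exact div_mul_cancel₀ _ hcx.ne'
    linear_combination ((N - 1) * Real.tan x) * hkey -
      ((N - 1) * Real.cos x ^ (N - 1 - 1)) * htan
  -- u = p * g has derivative -(lam * (p * v))
  have hu : ∀ x ∈ Set.Ioo (-(d / 2)) (d / 2),
      HasDerivAt (fun y => Real.cos y ^ (N - 1) * g y)
        (-(lam * (Real.cos x ^ (N - 1) * v x))) x := by
    intro x hx
    have h1 := (hp x hx).mul (hgdiff x hx)
    refine h1.congr_deriv ?_
    have h2 := hode x hx
    rw [← heq x hx] at h2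
    have : deriv (deriv v) x = (N - 1) * Real.tan x * g x - lam * v x := by linarith
    rw [this]; ring
  -- w = cos ^ N - c
  have hw : ∀ x ∈ Set.Ioo (-(d / 2)) (d / 2),
      HasDerivAt (fun y => Real.cos y ^ N - c)
        (-(N * Real.sin x * Real.cos x ^ (N - 1))) x := by
    intro x hx
    have hcx := hcos x hx
    have h1 : HasDerivAt (fun y => Real.cos y ^ N)
        (N * Real.cos x ^ (N - 1) * -Real.sin x) x :=
      (Real.hasDerivAt_rpow_const (Or.inl hcx.ne')).comp x (Real.hasDerivAt_cos x)
    refine (h1.sub_const c).congr_deriv ?_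
    ring
  -- W
  set W : ℝ → ℝ := fun y =>
    N * Real.sin y * (Real.cos y ^ (N - 1) * g y) - lam * (v y * (Real.cos y ^ N - c))
    with hWdef
  have hW : ∀ x ∈ Set.Ioo (-(d / 2)) (d / 2),
      HasDerivAt W (g x * (N * Real.cos x ^ N - lam * (Real.cos x ^ N - c))) x := by
    intro x hx
    have hcx := hcos x hx
    have h1 : HasDerivAt (fun y => N * Real.sin y) (N * Real.cos x) x :=
      (Real.hasDerivAt_sin x).const_mul N
    have h2 := (h1.mul (hu x hx)).sub (((hgd x hx).mul (hw x hx)).const_mul lam)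
    refine h2.congr_deriv ?_
    have hpc : Real.cos x ^ (N - 1) * Real.cos x = Real.cos x ^ N := by
      rw [Real.rpow_sub_one hcx.ne']
      exact div_mul_cancel₀ _ hcx.ne'
    linear_combination (N * g x) * hpc
  -- continuity of the pieces
  have hcontp : Continuous fun y : ℝ => Real.cos y ^ (N - 1) := by
    rw [continuous_iff_continuousAt]
    intro x
    exact (Real.continuousAt_rpow_const _ _ (Or.inr (by linarith))).comp
      Real.continuous_cos.continuousAt
  have hcontpN : Continuous fun y : ℝ => Real.cos y ^ N := by
    rw [continuous_iff_continuousAt]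
    intro x
    exact (Real.continuousAt_rpow_const _ _ (Or.inr (by linarith))).comp
      Real.continuous_cos.continuousAt
  have hucont : ContinuousOn (fun y => Real.cos y ^ (N - 1) * g y) I :=
    hcontp.continuousOn.mul hgcont
  have hWcont : ContinuousOn W I := by
    apply ContinuousOn.sub
    · exact ((continuous_const.mul Real.continuous_sin).continuousOn).mul hucont
    · exact continuousOn_const.mul
        (hvcont.mul ((hcontpN.continuousOn).sub continuousOn_const))
  -- FTC for u
  have hftc : ∀ s ∈ I, ∀ t ∈ I, s ≤ t →
      Real.cos t ^ (N - 1) * g t - Real.cos s ^ (N - 1) * g s =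
        ∫ y in s..t, -(lam * (Real.cos y ^ (N - 1) * v y)) := by
    intro s hs t ht hst
    refine (intervalIntegral.integral_eq_sub_of_hasDeriv_right_of_le
      (f := fun y => Real.cos y ^ (N - 1) * g y)
      (f' := fun y => -(lam * (Real.cos y ^ (N - 1) * v y))) hst ?_ ?_ ?_).symm
    · exact hucont.mono (Set.Icc_subset_Icc hs.1 ht.2)
    · intro y hy
      have hy' : y ∈ Set.Ioo (-(d / 2)) (d / 2) :=
        ⟨lt_of_le_of_lt hs.1 hy.1, lt_of_lt_of_le hy.2 ht.2⟩
      exact (hu y hy').hasDerivWithinAt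
    · apply ContinuousOn.intervalIntegrable
      apply ContinuousOn.neg
      apply continuousOn_const.mul
      apply hcontp.continuousOn.mul
      exact hvcont.mono (by rw [Set.uIcc_of_le hst]; exact Set.Icc_subset_Icc hs.1 ht.2)
  -- positivity of Q
  have hc0 : 0 ≤ c := Real.rpow_nonneg (Real.cos_nonneg_of_mem_Icc ⟨by linarith, hrπ⟩) N
  have hQ : ∀ x ∈ Set.Ioo (-(d / 2)) (d / 2),
      0 < N * Real.cos x ^ N - lam * (Real.cos x ^ N - c) := by
    intro x hx
    have hcx := hcos x hx
    have ht1 : Real.cos x ^ N ≤ 1 :=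
      Real.rpow_le_one hcx.le (Real.cos_le_one x) (by linarith)
    have htc : c < Real.cos x ^ N := by
      have habs : |x| < d / 2 := abs_lt.2 ⟨hx.1, hx.2⟩
      have h1 : Real.cos (d / 2) < Real.cos |x| :=
        Real.cos_lt_cos_of_nonneg_of_le_pi (abs_nonneg x) (by linarith) habs
      rw [Real.cos_abs] at h1
      exact Real.rpow_lt_rpow (Real.cos_nonneg_of_mem_Icc ⟨by linarith, hrπ⟩) h1
        (by linarith)
    have ht0 : 0 < Real.cos x ^ N := lt_of_le_of_lt hc0 htc
    nlinarith [mul_pos (sub_pos.2 hlt) ht0,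
      mul_nonneg (mul_nonneg hlam.le hc0) (sub_nonneg.2 ht1)]
  -- w positive in the interior
  have hwpos : ∀ x ∈ Set.Ioo (-(d / 2)) (d / 2), c < Real.cos x ^ N := by
    intro x hx
    have habs : |x| < d / 2 := abs_lt.2 ⟨hx.1, hx.2⟩
    have h1 : Real.cos (d / 2) < Real.cos |x| :=
      Real.cos_lt_cos_of_nonneg_of_le_pi (abs_nonneg x) (by linarith) habs
    rw [Real.cos_abs] at h1
    exact Real.rpow_lt_rpow (Real.cos_nonneg_of_mem_Icc ⟨by linarith, hrπ⟩) h1 (by linarith)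
  -- the left endpoint of the maximal interval of positivity of g around x₁
  set S : Set ℝ := {-(d / 2)} ∪ {x | x ∈ Set.Icc (-(d / 2)) x₁ ∧ g x ≤ 0} with hSdef
  have hSclosed : IsClosed S := by
    apply IsClosed.union isClosed_singleton
    have hset : {x | x ∈ Set.Icc (-(d / 2)) x₁ ∧ g x ≤ 0}
        = Set.Icc (-(d / 2)) x₁ ∩ g ⁻¹' (Set.Iic 0) := rfl
    rw [hset]
    exact (hgcont.mono (Set.Icc_subset_Icc (le_refl _) hx₁.2.le)).preimage_isClosed_of_isClosed
      isClosed_Icc isClosed_Iic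
  have hSne : S.Nonempty := ⟨-(d / 2), Or.inl rfl⟩
  have hSbdd : BddAbove S := by
    refine ⟨x₁, ?_⟩
    rintro y (hy | hy)
    · rw [Set.mem_singleton_iff] at hy; rw [hy]; exact hx₁.1.le
    · exact hy.1.2
  set a := sSup S with hadef
  have haS : a ∈ S := hSclosed.csSup_mem hSne hSbdd
  have ha_le : a ≤ x₁ := by
    apply csSup_le hSne
    rintro y (hy | hy)
    · rw [Set.mem_singleton_iff] at hy; rw [hy]; exact hx₁.1.le
    · exact hy.1.2
  have ha_ge : -(d / 2) ≤ a := le_csSup hSbdd (Or.inl rfl)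
  have ha_lt : a < x₁ := by
    rcases lt_or_eq_of_le ha_le with h | h
    · exact h
    · exfalso
      rcases haS with hy | hy
      · rw [Set.mem_singleton_iff] at hy; rw [h] at hy
        have := hx₁.1; rw [hy] at this; exact lt_irrefl _ this
      · rw [h] at hy; linarith [hy.2, hgx₁]
  have haI : a ∈ I := ⟨ha_ge, by linarith [hx₁.2]⟩
  have hgpos : ∀ x, a < x → x ≤ x₁ → 0 < g x := by
    intro x h1 h2
    by_contra h
    push_neg at h
    have : x ∈ S := Or.inr ⟨⟨by linarith, h2⟩, h⟩
    have := le_csSup hSbdd this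
    linarith
  have hWa : 0 ≤ W a := by
    by_cases hae : a = -(d / 2)
    · rw [hWdef, hae]
      simp [hbc₁, Real.cos_neg, hcdef]
    · -- a is an interior point
      have haIoo : a ∈ Set.Ioo (-(d / 2)) (d / 2) :=
        ⟨lt_of_le_of_ne ha_ge (Ne.symm hae), by linarith [hx₁.2]⟩
      have hga : g a ≤ 0 := by
        rcases haS with hy | hy
        · rw [Set.mem_singleton_iff] at hy; exact absurd hy hae
        · exact hy.2
      have hga0 : g a = 0 := by
        refine le_antisymm hga ?_
        have hta : Filter.Tendsto g (𝓝[>] a) (𝓝 (g a)) :=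
          (hgcont.continuousAt (hnhds a haIoo)).tendsto.mono_left nhdsWithin_le_nhds
        refine ge_of_tendsto hta ?_
        filter_upwards [Ioc_mem_nhdsGT_of_mem ⟨le_refl a, ha_lt⟩] with y hy
        exact (hgpos y hy.1 hy.2).le
      have hva : v a ≤ 0 := by
        by_contra hva
        push_neg at hva
        have hvA : ContinuousAt v a := hvcont.continuousAt (hnhds a haIoo)
        have h1 : ∀ᶠ y in 𝓝 a, 0 < v y := hvA.eventually (eventually_gt_nhds hva)
        obtain ⟨ε, hε, hball⟩ := Metric.eventually_nhds_iff.mp h1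
        set t := min (a + ε / 2) ((a + x₁) / 2) with htdef
        have ht1 : a < t := lt_min (by linarith) (by linarith)
        have ht2 : t ≤ x₁ := le_trans (min_le_right _ _) (by linarith)
        have ht3 : t - a < ε := by
          have h : t ≤ a + ε / 2 := by rw [htdef]; exact min_le_left _ _
          linarith
        have htI : t ∈ I := ⟨by linarith, by linarith [hx₁.2]⟩
        have h2 := hftc a haI t htI ht1.le
        have hgt : 0 < g t := hgpos t ht1 ht2
        have hpt : 0 < Real.cos t ^ (N - 1) :=
          Real.rpow_pos_of_pos (hcos t ⟨by linarith [haIoo.1], by linarith [hx₁.2]⟩) _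
        have hint : (0:ℝ) < ∫ y in a..t, lam * (Real.cos y ^ (N - 1) * v y) := by
          apply intervalIntegral.intervalIntegral_pos_of_pos_on
          · apply ContinuousOn.intervalIntegrable
            apply continuousOn_const.mul
            apply hcontp.continuousOn.mul
            apply hvcont.mono
            rw [Set.uIcc_of_le ht1.le]
            exact Set.Icc_subset_Icc haI.1 htI.2
          · intro y hy
            have hyIoo : y ∈ Set.Ioo (-(d / 2)) (d / 2) :=
              ⟨by linarith [haIoo.1, hy.1], by linarith [hy.2, ht2, hx₁.2]⟩
            have hvy : 0 < v y := by
              apply hball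
              rw [Real.dist_eq, abs_of_pos (by linarith [hy.1] : (0:ℝ) < y - a)]
              linarith [hy.2]
            exact mul_pos hlam (mul_pos (Real.rpow_pos_of_pos (hcos y hyIoo) _) hvy)
          · exact ht1
        rw [intervalIntegral.integral_neg] at h2
        rw [hga0] at h2
        nlinarith [mul_pos hpt hgt]
      rw [hWdef]
      simp only
      rw [hga0]
      have hwa := hwpos a haIoo
      nlinarith [mul_nonneg hlam.le (mul_nonneg (neg_nonneg.2 hva) (sub_nonneg.2 hwa.le))]
  -- the right endpoint of the maximal interval of positivity of g around x₁
  set T : Set ℝ := {(d / 2)} ∪ {x | x ∈ Set.Icc x₁ (d / 2) ∧ g x ≤ 0} with hTdef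
  have hTclosed : IsClosed T := by
    apply IsClosed.union isClosed_singleton
    have hset : {x | x ∈ Set.Icc x₁ (d / 2) ∧ g x ≤ 0}
        = Set.Icc x₁ (d / 2) ∩ g ⁻¹' (Set.Iic 0) := rfl
    rw [hset]
    exact (hgcont.mono (Set.Icc_subset_Icc hx₁.1.le (le_refl _))).preimage_isClosed_of_isClosed
      isClosed_Icc isClosed_Iic
  have hTne : T.Nonempty := ⟨d / 2, Or.inl rfl⟩
  have hTbdd : BddBelow T := by
    refine ⟨x₁, ?_⟩
    rintro y (hy | hy)
    · rw [Set.mem_singleton_iff] at hy; rw [hy]; exact hx₁.2.le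
    · exact hy.1.1
  set b := sInf T with hbdef
  have hbT : b ∈ T := hTclosed.csInf_mem hTne hTbdd
  have hb_ge : x₁ ≤ b := by
    apply le_csInf hTne
    rintro y (hy | hy)
    · rw [Set.mem_singleton_iff] at hy; rw [hy]; exact hx₁.2.le
    · exact hy.1.1
  have hb_le : b ≤ d / 2 := csInf_le hTbdd (Or.inl rfl)
  have hb_gt : x₁ < b := by
    rcases lt_or_eq_of_le hb_ge with h | h
    · exact h
    · exfalso
      rcases hbT with hy | hy
      · rw [Set.mem_singleton_iff] at hy; rw [← h] at hy
        have := hx₁.2; rw [hy] at this; exact lt_irrefl _ this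
      · rw [← h] at hy; linarith [hy.2, hgx₁]
  have hbI : b ∈ I := ⟨by linarith [hx₁.1], hb_le⟩
  have hgposR : ∀ x, x₁ ≤ x → x < b → 0 < g x := by
    intro x h1 h2
    by_contra h
    push_neg at h
    have : x ∈ T := Or.inr ⟨⟨h1, by linarith [hb_le]⟩, h⟩
    have := csInf_le hTbdd this
    linarith
  have hWb : W b ≤ 0 := by
    by_cases hbe : b = d / 2
    · rw [hWdef, hbe]
      simp [hbc₂, hcdef]
    · -- b is an interior point
      have hbIoo : b ∈ Set.Ioo (-(d / 2)) (d / 2) :=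
        ⟨by linarith [hx₁.1], lt_of_le_of_ne hb_le hbe⟩
      have hgb : g b ≤ 0 := by
        rcases hbT with hy | hy
        · rw [Set.mem_singleton_iff] at hy; exact absurd hy hbe
        · exact hy.2
      have hgb0 : g b = 0 := by
        refine le_antisymm hgb ?_
        have hta : Filter.Tendsto g (𝓝[<] b) (𝓝 (g b)) :=
          (hgcont.continuousAt (hnhds b hbIoo)).tendsto.mono_left nhdsWithin_le_nhds
        refine ge_of_tendsto hta ?_
        filter_upwards [Ico_mem_nhdsLT_of_mem ⟨hb_gt, le_refl b⟩] with y hy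
        exact (hgposR y hy.1 hy.2).le
      have hvb : 0 ≤ v b := by
        by_contra hvb
        push_neg at hvb
        have hvB : ContinuousAt v b := hvcont.continuousAt (hnhds b hbIoo)
        have h1 : ∀ᶠ y in 𝓝 b, v y < 0 := hvB.eventually (eventually_lt_nhds hvb)
        obtain ⟨ε, hε, hball⟩ := Metric.eventually_nhds_iff.mp h1
        set t := max (b - ε / 2) ((x₁ + b) / 2) with htdef
        have ht1 : t < b := max_lt (by linarith) (by linarith)
        have ht2 : x₁ ≤ t := le_trans (by linarith) (le_max_right _ _)
        have ht3 : b - t < ε := by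
          have h : b - ε / 2 ≤ t := by rw [htdef]; exact le_max_left _ _
          linarith
        have htI : t ∈ I := ⟨by linarith [hx₁.1], by linarith⟩
        have h2 := hftc t htI b hbI ht1.le
        have hgt : 0 < g t := hgposR t ht2 ht1
        have hpt : 0 < Real.cos t ^ (N - 1) :=
          Real.rpow_pos_of_pos (hcos t ⟨by linarith [hx₁.1], by linarith [hbIoo.2]⟩) _
        have hint : (0:ℝ) < ∫ y in t..b, -(lam * (Real.cos y ^ (N - 1) * v y)) := by
          apply intervalIntegral.intervalIntegral_pos_of_pos_on
          · apply ContinuousOn.intervalIntegrable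
            apply ContinuousOn.neg
            apply continuousOn_const.mul
            apply hcontp.continuousOn.mul
            apply hvcont.mono
            rw [Set.uIcc_of_le ht1.le]
            exact Set.Icc_subset_Icc htI.1 hbI.2
          · intro y hy
            have hyIoo : y ∈ Set.Ioo (-(d / 2)) (d / 2) :=
              ⟨by linarith [htI.1, hy.1], by linarith [hy.2, hbIoo.2]⟩
            have hvy : v y < 0 := by
              apply hball
              rw [Real.dist_eq, abs_of_neg (by linarith [hy.2] : y - b < 0)]
              linarith [hy.1]
            have := mul_pos (Real.rpow_pos_of_pos (hcos y hyIoo) (N - 1)) (neg_pos.2 hvy)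
            nlinarith
          · exact ht1
        rw [hgb0] at h2
        nlinarith [mul_pos hpt hgt]
      rw [hWdef]
      simp only
      rw [hgb0]
      have hwb := hwpos b hbIoo
      nlinarith [mul_nonneg hlam.le (mul_nonneg hvb (sub_nonneg.2 hwb.le))]
  -- conclusion via strict monotonicity of W on [a, b]
  have hab : a < b := lt_trans ha_lt hb_gt
  have hIccsub : Set.Icc a b ⊆ I := Set.Icc_subset_Icc haI.1 hbI.2
  have hgmid : ∀ x ∈ Set.Ioo a b, 0 < g x := by
    intro x hx
    rcases le_or_gt x x₁ with h | h
    · exact hgpos x hx.1 h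
    · exact hgposR x h.le hx.2
  have hmono : StrictMonoOn W (Set.Icc a b) := by
    apply strictMonoOn_of_deriv_pos (convex_Icc a b) (hWcont.mono hIccsub)
    intro x hx
    rw [interior_Icc] at hx
    have hxIoo : x ∈ Set.Ioo (-(d / 2)) (d / 2) :=
      ⟨lt_of_le_of_lt haI.1 hx.1, lt_of_lt_of_le hx.2 hbI.2⟩
    rw [(hW x hxIoo).deriv]
    exact mul_pos (hgmid x hx) (hQ x hxIoo)
  have := hmono ⟨le_refl a, hab.le⟩ ⟨hab.le, le_refl b⟩ hab
  linarith [hWa, hWb]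




/-- The one-dimensional model eigenvalue bound: any positive `λ` admitting a
nonconstant Neumann solution of `v'' - (N-1) tan(x) v' = -λ v` on `(-d/2, d/2)` with
`0 < d ≤ π` satisfies `λ ≥ N / (1 - cos^N(d/2))`. -/
theorem stmt8 (N : ℝ) (hN : 1 < N) (d : ℝ) (hd : 0 < d) (hd' : d ≤ Real.pi)
    (lam : ℝ) (hlam : 0 < lam) (v : ℝ → ℝ)
    (hv : ContDiffOn ℝ 2 v (Set.Icc (-(d / 2)) (d / 2)))
    (hnc : ¬ ∀ x ∈ Set.Icc (-(d / 2)) (d / 2), ∀ y ∈ Set.Icc (-(d / 2)) (d / 2), v x = v y)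
    (hode : ∀ x ∈ Set.Ioo (-(d / 2)) (d / 2),
      deriv (deriv v) x - (N - 1) * Real.tan x * deriv v x = -lam * v x)
    (hbc₁ : derivWithin v (Set.Icc (-(d / 2)) (d / 2)) (-(d / 2)) = 0)
    (hbc₂ : derivWithin v (Set.Icc (-(d / 2)) (d / 2)) (d / 2) = 0) :
    N / (1 - Real.cos (d / 2) ^ N) ≤ lam := by
  by_contra hcon
  push_neg at hcon
  have hr : 0 < d / 2 := by linarith
  have hc1 : Real.cos (d / 2) ^ N < 1 := by
    have h0 : Real.cos (d / 2) < 1 := by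
      have h := Real.cos_lt_cos_of_nonneg_of_le_pi (le_refl 0) (by linarith : d / 2 ≤ π) hr
      rwa [Real.cos_zero] at h
    have hnn : 0 ≤ Real.cos (d / 2) :=
      Real.cos_nonneg_of_mem_Icc ⟨by linarith, by linarith⟩
    exact Real.rpow_lt_one hnn h0 (by linarith)
  have hposc : 0 < 1 - Real.cos (d / 2) ^ N := by linarith
  have hlt : lam * (1 - Real.cos (d / 2) ^ N) < N := by
    rw [lt_div_iff₀ hposc] at hcon; linarith
  have hIU : UniqueDiffOn ℝ (Set.Icc (-(d / 2)) (d / 2)) :=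
    uniqueDiffOn_Icc (by linarith)
  have hex : ∃ x₁ ∈ Set.Ioo (-(d / 2)) (d / 2),
      derivWithin v (Set.Icc (-(d / 2)) (d / 2)) x₁ ≠ 0 := by
    by_contra hno
    push_neg at hno
    have hz : ∀ x ∈ Set.Ico (-(d / 2)) (d / 2),
        derivWithin v (Set.Icc (-(d / 2)) (d / 2)) x = 0 := by
      intro x hx
      rcases eq_or_lt_of_le hx.1 with h | h
      · rw [← h]; exact hbc₁
      · exact hno x ⟨h, hx.2⟩
    have hconst := constant_of_derivWithin_zero (hv.differentiableOn (by norm_num)) hz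
    apply hnc
    intro x hx y hy
    rw [hconst x hx, hconst y hy]
  obtain ⟨x₁, hx₁, hgx₁⟩ := hex
  rcases lt_or_gt_of_ne hgx₁ with hneg | hpos'
  · -- apply the key lemma to -v
    refine key N hN d hd hd' lam hlam (fun x => -v x) hv.neg ?_ ?_ ?_ hlt x₁ hx₁ ?_
    · intro x hx
      have e1 : (deriv fun y => -v y) = fun y => -deriv v y := funext fun y => deriv.neg
      simp only [e1, deriv.fun_neg]
      have := hode x hx
      linarith
    · rw [derivWithin.fun_neg, hbc₁, neg_zero]
    · rw [derivWithin.fun_neg, hbc₂, neg_zero]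
    · rw [derivWithin.fun_neg]
      linarith
  · exact key N hN d hd hd' lam hlam v hv hode hbc₁ hbc₂ hlt x₁ hx₁ hpos'
end
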